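/- Let n ≥ 2 and let U : [−1,1] → ℝ be strictly concave and strictly increasing. Then the maximizer of S(r₁,…,rₙ) = Σ_{1≤i<j≤n} U(r_i − r_j) over [0,1]ⁿ is unique. -/

import Mathlib

open Finset Set


lemma fin_pos_of_ne_zero' {n : ℕ} [NeZero n] {i : Fin n} (h : i ≠ 0) : 0 < i := by
  rcases n with _ | m
  · exact i.elim0
  · exact Fin.pos_of_ne_zero h

/-- Auxiliary: if `r = s + c` with `c > 0` and both feasible, then `s` is not optimal. -/
lemma stmt2_aux (n : ℕ) (hn : 2 ≤ n) (U : ℝ → ℝ)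
    (hUmono : StrictMonoOn U (Set.Icc (-1 : ℝ) 1))
    (r s : Fin n → ℝ)
    (hr : ∀ i, r i ∈ Set.Icc (0 : ℝ) 1) (hs : ∀ i, s i ∈ Set.Icc (0 : ℝ) 1)
    (c : ℝ) (hc : 0 < c) (hrc : ∀ i, r i = s i + c)
    (hsopt : ∀ u : Fin n → ℝ, (∀ i, u i ∈ Set.Icc (0 : ℝ) 1) →
      (∑ i : Fin n, ∑ j ∈ Finset.Ioi i, U (u i - u j)) ≤
        ∑ i : Fin n, ∑ j ∈ Finset.Ioi i, U (s i - s j)) : False := by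
  haveI : NeZero n := ⟨by omega⟩
  set u : Fin n → ℝ := Function.update s 0 (s 0 + c) with hu_def
  have hu0 : u 0 = s 0 + c := Function.update_self _ _ _
  have hune : ∀ j : Fin n, j ≠ 0 → u j = s j := fun j hj => Function.update_of_ne hj _ _
  have hr0 : r 0 = s 0 + c := hrc 0
  have hu : ∀ i, u i ∈ Set.Icc (0 : ℝ) 1 := by
    intro i
    by_cases h : i = 0
    · subst h
      rw [hu0]
      constructor
      · have := (hs 0).1; linarith
      · have := (hr 0).2; linarith
    · rw [hune i h]; exact hs i
  have hle := hsopt u hu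
  have hlt : (∑ i : Fin n, ∑ j ∈ Finset.Ioi i, U (s i - s j)) <
      ∑ i : Fin n, ∑ j ∈ Finset.Ioi i, U (u i - u j) := by
    apply Finset.sum_lt_sum
    · intro i _
      by_cases h : i = 0
      · subst h
        apply Finset.sum_le_sum
        intro j hj
        have hj0 : j ≠ 0 := by
          intro hj0; subst hj0; exact absurd (Finset.mem_Ioi.mp hj) (lt_irrefl _)
        rw [hu0, hune j hj0]
        apply le_of_lt
        apply hUmono
        · constructor
          · have := (hs 0).1; have := (hs j).2; linarith
          · have := (hs 0).2; have := (hs j).1; linarith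
        · constructor
          · have := (hs 0).1; have := (hs j).2; linarith
          · have := (hr 0).2; have := (hs j).1; linarith
        · linarith
      · apply le_of_eq
        apply Finset.sum_congr rfl
        intro j hj
        have hi0 : (0 : Fin n) < i := fin_pos_of_ne_zero' h
        have hj0 : j ≠ 0 := by
          have := Finset.mem_Ioi.mp hj
          intro hj0; subst hj0; exact absurd (hi0.trans this) (lt_irrefl _)
        rw [hune i h, hune j hj0]
    · refine ⟨0, Finset.mem_univ _, ?_⟩
      apply Finset.sum_lt_sum_of_nonempty
      · refine ⟨⟨1, by omega⟩, Finset.mem_Ioi.mpr ?_⟩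
        apply fin_pos_of_ne_zero'
        intro hh
        have := congrArg Fin.val hh
        simp [Fin.val_zero] at this
      · intro j hj
        have hj0 : j ≠ 0 := by
          intro hj0; subst hj0; exact absurd (Finset.mem_Ioi.mp hj) (lt_irrefl _)
        rw [hu0, hune j hj0]
        apply hUmono
        · constructor
          · have := (hs 0).1; have := (hs j).2; linarith
          · have := (hs 0).2; have := (hs j).1; linarith
        · constructor
          · have := (hs 0).1; have := (hs j).2; linarith
          · have := (hr 0).2; have := (hs j).1; linarith
        · linarith
  linarith

/-- If `U` is strictly concave and strictly increasing on `[-1,1]`,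
then the maximizer of `S(r) = ∑_{i<j} U(r_i - r_j)` over `[0,1]^n` is unique. -/
theorem stmt2 (n : ℕ) (hn : 2 ≤ n) (U : ℝ → ℝ)
    (hUconc : StrictConcaveOn ℝ (Set.Icc (-1 : ℝ) 1) U)
    (hUmono : StrictMonoOn U (Set.Icc (-1 : ℝ) 1))
    (r s : Fin n → ℝ)
    (hr : ∀ i, r i ∈ Set.Icc (0 : ℝ) 1) (hs : ∀ i, s i ∈ Set.Icc (0 : ℝ) 1)
    (hropt : ∀ u : Fin n → ℝ, (∀ i, u i ∈ Set.Icc (0 : ℝ) 1) →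
      (∑ i : Fin n, ∑ j ∈ Finset.Ioi i, U (u i - u j)) ≤
        ∑ i : Fin n, ∑ j ∈ Finset.Ioi i, U (r i - r j))
    (hsopt : ∀ u : Fin n → ℝ, (∀ i, u i ∈ Set.Icc (0 : ℝ) 1) →
      (∑ i : Fin n, ∑ j ∈ Finset.Ioi i, U (u i - u j)) ≤
        ∑ i : Fin n, ∑ j ∈ Finset.Ioi i, U (s i - s j)) :
    r = s := by
  haveI : NeZero n := ⟨by omega⟩
  have hSeq : (∑ i : Fin n, ∑ j ∈ Finset.Ioi i, U (s i - s j)) =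
      ∑ i : Fin n, ∑ j ∈ Finset.Ioi i, U (r i - r j) :=
    le_antisymm (hropt s hs) (hsopt r hr)
  -- membership of differences
  have hdr : ∀ i j : Fin n, r i - r j ∈ Set.Icc (-1 : ℝ) 1 := by
    intro i j
    have h1 := hr i; have h2 := hr j
    constructor <;> [skip; skip] <;> (simp only [Set.mem_Icc] at h1 h2; linarith [h1.1, h1.2, h2.1, h2.2])
  have hds : ∀ i j : Fin n, s i - s j ∈ Set.Icc (-1 : ℝ) 1 := by
    intro i j
    have h1 := hs i; have h2 := hs j
    constructor <;> [skip; skip] <;> (simp only [Set.mem_Icc] at h1 h2; linarith [h1.1, h1.2, h2.1, h2.2])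
  -- concavity midpoint inequality
  have conc : ∀ x ∈ Set.Icc (-1 : ℝ) 1, ∀ y ∈ Set.Icc (-1 : ℝ) 1, x ≠ y →
      (U x + U y) / 2 < U ((x + y) / 2) := by
    intro x hx y hy hxy
    have h := hUconc.2 hx hy hxy (by norm_num : (0:ℝ) < 1/2) (by norm_num : (0:ℝ) < 1/2)
      (by norm_num)
    rw [smul_eq_mul, smul_eq_mul, smul_eq_mul, smul_eq_mul] at h
    have : (1:ℝ)/2 * x + 1/2 * y = (x + y) / 2 := by ring
    rw [this] at h
    linarith
  -- Step 1: all pairwise differences agree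
  have key : ∀ i j : Fin n, i < j → r i - r j = s i - s j := by
    by_contra hcon
    push_neg at hcon
    obtain ⟨i0, j0, hij0, hne0⟩ := hcon
    set m : Fin n → ℝ := fun i => (r i + s i) / 2 with hm_def
    have hm : ∀ i, m i ∈ Set.Icc (0 : ℝ) 1 := by
      intro i
      have h1 := hr i; have h2 := hs i
      simp only [Set.mem_Icc] at h1 h2 ⊢
      constructor <;> simp only [hm_def] <;> linarith [h1.1, h1.2, h2.1, h2.2]
    have hmd : ∀ i j : Fin n, m i - m j = ((r i - r j) + (s i - s j)) / 2 := by
      intro i j; simp only [hm_def]; ring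
    have hterm_le : ∀ i j : Fin n, (U (r i - r j) + U (s i - s j)) / 2 ≤ U (m i - m j) := by
      intro i j
      by_cases h : r i - r j = s i - s j
      · rw [hmd, ← h]
        have : (r i - r j + (r i - r j)) / 2 = r i - r j := by ring
        rw [this, h]
        linarith
      · rw [hmd]
        exact le_of_lt (conc _ (hdr i j) _ (hds i j) h)
    have hmain : (∑ i : Fin n, ∑ j ∈ Finset.Ioi i, (U (r i - r j) + U (s i - s j)) / 2) <
        ∑ i : Fin n, ∑ j ∈ Finset.Ioi i, U (m i - m j) := by
      apply Finset.sum_lt_sum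
      · intro i _
        exact Finset.sum_le_sum fun j _ => hterm_le i j
      · refine ⟨i0, Finset.mem_univ _, ?_⟩
        apply Finset.sum_lt_sum
        · intro j _; exact hterm_le i0 j
        · refine ⟨j0, Finset.mem_Ioi.mpr hij0, ?_⟩
          rw [hmd]
          exact conc _ (hdr i0 j0) _ (hds i0 j0) hne0
    have hsplit : (∑ i : Fin n, ∑ j ∈ Finset.Ioi i, (U (r i - r j) + U (s i - s j)) / 2) =
        ((∑ i : Fin n, ∑ j ∈ Finset.Ioi i, U (r i - r j)) +
         (∑ i : Fin n, ∑ j ∈ Finset.Ioi i, U (s i - s j))) / 2 := by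
      rw [← Finset.sum_add_distrib, Finset.sum_div]
      apply Finset.sum_congr rfl
      intro i _
      rw [← Finset.sum_add_distrib, Finset.sum_div]
    have hropt_m := hropt m hm
    rw [hsplit, hSeq] at hmain
    linarith
  -- Step 2: r = s + c
  set c : ℝ := r 0 - s 0 with hc_def
  have hrc : ∀ i, r i = s i + c := by
    intro i
    by_cases h : i = 0
    · subst h; simp only [hc_def]; ring
    · have h0i : (0 : Fin n) < i := fin_pos_of_ne_zero' h
      have := key 0 i h0i
      simp only [hc_def]
      linarith
  rcases lt_trichotomy c 0 with hneg | hzero | hpos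
  · exfalso
    have hsc : ∀ i, s i = r i + (-c) := fun i => by have := hrc i; linarith
    exact stmt2_aux n hn U hUmono s r hs hr (-c) (by linarith) hsc hropt
  · funext i
    have := hrc i
    rw [hzero] at this
    linarith
  · exact absurd (stmt2_aux n hn U hUmono r s hr hs c hpos hrc hsopt) not_false
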